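/- Let n ≥ 1 and let (J,γ) be the Cayley algebra of dimension n, i.e., J = ℝⁿ with product (u∙v)_m = Σ_{k=1}^{m-1} u_k v_{m-k} and γ(u,v) = Σ_{k=1}^{n} u_k v_{n+1-k}. Then: (a) every p ∈ J with p∙q = 0 for all q ∈ J lies in the span of the last standard basis vector e_n; and (b) (J,γ) is irreducible, i.e., J admits no decomposition as the direct sum of two nonzero ideals that are mutually γ-orthogonal. -/

import Mathlib

open scoped BigOperators

/-- The product of the Cayley algebra of dimension `n` (0-indexed version of
`(u∙v)_m = Σ_{k=1}^{m-1} u_k v_{m-k}`). -/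
def cayleyMul {n : ℕ} (u v : Fin n → ℝ) : Fin n → ℝ := fun m =>
  ∑ p ∈ Finset.univ.filter
    (fun p : Fin n × Fin n => (p.1 : ℕ) + (p.2 : ℕ) + 1 = (m : ℕ)), u p.1 * v p.2

/-- The trace form of the Cayley algebra of dimension `n` (0-indexed version of
`γ(u,v) = Σ_{k=1}^n u_k v_{n+1-k}`). -/
def cayleyForm {n : ℕ} (u v : Fin n → ℝ) : ℝ := ∑ i : Fin n, u i * v i.rev

lemma cayleyMul_single {n : ℕ} (x : Fin n → ℝ) (j m : Fin n)
    (h : (j : ℕ) + 1 ≤ (m : ℕ)) :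
    cayleyMul x (Pi.single j (1 : ℝ)) m = x ⟨(m : ℕ) - (j : ℕ) - 1, by omega⟩ := by
  unfold cayleyMul
  rw [Finset.sum_eq_single ((⟨(m : ℕ) - (j : ℕ) - 1, by omega⟩ : Fin n), j)]
  · simp
  · rintro ⟨i, j'⟩ hp hne
    simp only [Finset.mem_filter, Finset.mem_univ, true_and] at hp
    by_cases hj : j' = j
    · subst hj
      exact absurd (by
        have : (i : ℕ) = (m : ℕ) - (j' : ℕ) - 1 := by omega
        simp [Prod.ext_iff, Fin.ext_iff, this]) hne
    · simp [Pi.single_eq_of_ne hj]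
  · intro habs
    exact absurd (by
      simp only [Finset.mem_filter, Finset.mem_univ, true_and]
      omega) habs

lemma cayleyMul_single_zero {n : ℕ} (x : Fin n → ℝ) (j m : Fin n)
    (h : (m : ℕ) < (j : ℕ) + 1) :
    cayleyMul x (Pi.single j (1 : ℝ)) m = 0 := by
  unfold cayleyMul
  apply Finset.sum_eq_zero
  rintro ⟨i, j'⟩ hp
  simp only [Finset.mem_filter, Finset.mem_univ, true_and] at hp
  have hj : j' ≠ j := by rintro rfl; omega
  simp [Pi.single_eq_of_ne hj]

lemma smul_mem_cancel {n : ℕ} (I : Submodule ℝ (Fin n → ℝ)) (c : ℝ) (hc : c ≠ 0)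
    (v : Fin n → ℝ) (h : c • v ∈ I) : v ∈ I := by
  have h2 := I.smul_mem c⁻¹ h
  rwa [smul_smul, inv_mul_cancel₀ hc, one_smul] at h2

lemma ideal_contains_last {n : ℕ} (hn : 1 ≤ n) (I : Submodule ℝ (Fin n → ℝ))
    (hI : ∀ x ∈ I, ∀ y, cayleyMul x y ∈ I) (hne : I ≠ ⊥) :
    Pi.single (⟨n - 1, Nat.sub_lt hn Nat.one_pos⟩ : Fin n) (1 : ℝ) ∈ I := by
  obtain ⟨x, hxI, hx0⟩ := Submodule.exists_mem_ne_zero_of_ne_bot hne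
  -- choose a minimal index k with x k ≠ 0
  have hex : ∃ k : ℕ, ∃ hk : k < n, x ⟨k, hk⟩ ≠ 0 := by
    by_contra hc
    push_neg at hc
    exact hx0 (funext fun i => hc i i.isLt)
  classical
  let k := Nat.find hex
  obtain ⟨hk, hxk⟩ := Nat.find_spec hex
  have hmin : ∀ i : Fin n, (i : ℕ) < k → x i = 0 := by
    intro i hi
    by_contra hxi
    exact absurd (Nat.find_min hex hi ⟨i.isLt, by simpa using hxi⟩) (by simp)
  by_cases hkn : k = n - 1
  · -- x is a multiple of the last basis vector
    have hxeq : x = x ⟨k, hk⟩ • (Pi.single (⟨n - 1, by omega⟩ : Fin n) (1 : ℝ) : Fin n → ℝ) := by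
      funext i
      by_cases hi : i = (⟨n - 1, by omega⟩ : Fin n)
      · subst hi
        simp [Fin.ext_iff, hkn]
      · have hilt : (i : ℕ) < k := by
          have := i.isLt
          have : (i : ℕ) ≠ n - 1 := fun h => hi (Fin.ext (by simpa using h))
          omega
        rw [hmin i hilt]
        simp [Pi.single_eq_of_ne hi]
    exact smul_mem_cancel I _ hxk _ (hxeq ▸ hxI)
  · have hklt : k < n - 1 := by omega
    set j : Fin n := ⟨n - 2 - k, by omega⟩ with hj
    have hy : cayleyMul x (Pi.single j (1 : ℝ)) ∈ I := hI x hxI _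
    have hyeq : cayleyMul x (Pi.single j (1 : ℝ))
        = x ⟨k, hk⟩ • (Pi.single (⟨n - 1, by omega⟩ : Fin n) (1 : ℝ) : Fin n → ℝ) := by
      funext m
      by_cases hm : m = (⟨n - 1, by omega⟩ : Fin n)
      · subst hm
        rw [cayleyMul_single x j _ (by simp [hj]; omega)]
        have : (n - 1 : ℕ) - (j : ℕ) - 1 = k := by simp [hj]; omega
        simp [this]
      · have hmlt : (m : ℕ) < n - 1 := by
          have := m.isLt
          have : (m : ℕ) ≠ n - 1 := fun h => hm (Fin.ext (by simpa using h))
          omega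
        rw [Pi.smul_apply, Pi.single_eq_of_ne hm, smul_zero]
        by_cases hcase : (j : ℕ) + 1 ≤ (m : ℕ)
        · rw [cayleyMul_single x j m hcase]
          apply hmin
          simp only [hj]
          simp [hj] at hcase ⊢
          omega
        · exact cayleyMul_single_zero x j m (by omega)
    exact smul_mem_cancel I _ hxk _ (hyeq ▸ hy)

/-- in the Cayley algebra `(J,γ)` of dimension `n ≥ 1`: (a) every `p` with
`p∙q = 0` for all `q` lies in the span of the last standard basis vector `e_n`; and (b)
`(J,γ)` is irreducible: there is no decomposition of `J` into two nonzero mutually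
`γ`-orthogonal ideals. -/
theorem stmt_15 (n : ℕ) (hn : 1 ≤ n) :
    (∀ p : Fin n → ℝ, (∀ q, cayleyMul p q = 0) →
      p ∈ Submodule.span ℝ {Pi.single (⟨n - 1, by omega⟩ : Fin n) (1 : ℝ)}) ∧
    ¬(∃ I I' : Submodule ℝ (Fin n → ℝ), I ≠ ⊥ ∧ I' ≠ ⊥ ∧ IsCompl I I' ∧
        (∀ x ∈ I, ∀ y, cayleyMul x y ∈ I) ∧ (∀ x ∈ I', ∀ y, cayleyMul x y ∈ I') ∧
        (∀ x ∈ I, ∀ y ∈ I', cayleyForm x y = 0)) := by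
  constructor
  · intro p hp
    rw [Submodule.mem_span_singleton]
    refine ⟨p ⟨n - 1, by omega⟩, ?_⟩
    funext i
    by_cases hi : i = (⟨n - 1, by omega⟩ : Fin n)
    · subst hi; simp
    · have hilt : (i : ℕ) < n - 1 := by
        have := i.isLt
        have : (i : ℕ) ≠ n - 1 := fun h => hi (Fin.ext (by simpa using h))
        omega
      rw [Pi.smul_apply, Pi.single_eq_of_ne hi, smul_zero]
      have h0 := hp (Pi.single (⟨0, by omega⟩ : Fin n) (1 : ℝ))
      have := congrFun h0 ⟨(i : ℕ) + 1, by omega⟩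
      rw [cayleyMul_single p _ _ (by simp)] at this
      simpa using this.symm
  · rintro ⟨I, I', hI0, hI'0, hcompl, hIdeal, hI'deal, -⟩
    have h1 := ideal_contains_last hn I hIdeal hI0
    have h2 := ideal_contains_last hn I' hI'deal hI'0
    have hbot : Pi.single (⟨n - 1, by omega⟩ : Fin n) (1 : ℝ) ∈ I ⊓ I' := ⟨h1, h2⟩
    rw [hcompl.inf_eq_bot, Submodule.mem_bot] at hbot
    have := congrFun hbot ⟨n - 1, by omega⟩
    simp at this
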